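/- Let x, y, z, a, b : I → ℝ be differentiable functions on an open interval I, set r(t) = (x(t),y(t),z(t)) ∈ ℝ³ and n(t) = (−a(t),−b(t),1)/√(1+a(t)²+b(t)²). If ż(t) = a(t)ẋ(t) + b(t)ẏ(t) for all t ∈ I (tangency to the contact distribution), then for every t ∈ I one has ṙ(t)·ṅ(t) = −(ȧ(t)ẋ(t) + ḃ(t)ẏ(t))/√(1+a(t)²+b(t)²); in particular ṙ(t)·ṅ(t) = 0 if and only if ȧ(t)ẋ(t) + ḃ(t)ẏ(t) = 0. -/

import Mathlib

open Matrix

/-- For a curve `(x,y,z,a,b)` of differentiable functions on an open interval `I`,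
with position `r = (x,y,z)` and unit normal `n = (−a,−b,1)/√(1+a²+b²)`, if the
nonholonomic constraint `ż = aẋ + bẏ` holds on `I`, then on `I` one has
`ṙ·ṅ = −(ȧẋ + ḃẏ)/√(1+a²+b²)`; in particular `ṙ·ṅ = 0 ↔ ȧẋ + ḃẏ = 0`. -/
theorem attacking_mode_dot_formula (c d : ℝ) (x y z a b : ℝ → ℝ)
    (hx : ∀ t ∈ Set.Ioo c d, DifferentiableAt ℝ x t)
    (hy : ∀ t ∈ Set.Ioo c d, DifferentiableAt ℝ y t)
    (hz : ∀ t ∈ Set.Ioo c d, DifferentiableAt ℝ z t)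
    (ha : ∀ t ∈ Set.Ioo c d, DifferentiableAt ℝ a t)
    (hb : ∀ t ∈ Set.Ioo c d, DifferentiableAt ℝ b t)
    (hcon : ∀ t ∈ Set.Ioo c d, deriv z t = a t * deriv x t + b t * deriv y t) :
    ∀ t ∈ Set.Ioo c d,
      (deriv (fun s => (![x s, y s, z s] : Fin 3 → ℝ)) t ⬝ᵥ
        deriv (fun s =>
          (Real.sqrt (1 + a s ^ 2 + b s ^ 2))⁻¹ • (![-a s, -b s, 1] : Fin 3 → ℝ)) t
        = -(deriv a t * deriv x t + deriv b t * deriv y t)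
            / Real.sqrt (1 + a t ^ 2 + b t ^ 2)) ∧
      (deriv (fun s => (![x s, y s, z s] : Fin 3 → ℝ)) t ⬝ᵥ
        deriv (fun s =>
          (Real.sqrt (1 + a s ^ 2 + b s ^ 2))⁻¹ • (![-a s, -b s, 1] : Fin 3 → ℝ)) t = 0
        ↔ deriv a t * deriv x t + deriv b t * deriv y t = 0) := by
  intro t ht
  have hxt := (hx t ht).hasDerivAt
  have hyt := (hy t ht).hasDerivAt
  have hzt := (hz t ht).hasDerivAt
  have hat := (ha t ht).hasDerivAt
  have hbt := (hb t ht).hasDerivAt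
  -- positivity of u = 1 + a² + b²
  have hu_pos : (0:ℝ) < 1 + a t ^ 2 + b t ^ 2 := by positivity
  have hu_ne : (1 : ℝ) + a t ^ 2 + b t ^ 2 ≠ 0 := ne_of_gt hu_pos
  have hs_pos : (0:ℝ) < Real.sqrt (1 + a t ^ 2 + b t ^ 2) := Real.sqrt_pos.2 hu_pos
  have hs_ne : Real.sqrt (1 + a t ^ 2 + b t ^ 2) ≠ 0 := ne_of_gt hs_pos
  have hs_sq : Real.sqrt (1 + a t ^ 2 + b t ^ 2) ^ 2 = 1 + a t ^ 2 + b t ^ 2 :=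
    Real.sq_sqrt hu_pos.le
  -- derivative of u
  have hu : HasDerivAt (fun s => 1 + a s ^ 2 + b s ^ 2)
      (2 * a t * deriv a t + 2 * b t * deriv b t) t := by
    have := ((hat.fun_pow 2).const_add 1).fun_add (hbt.fun_pow 2)
    convert! this using 1
    ring
  -- derivative of √u
  have hsqrt : HasDerivAt (fun s => Real.sqrt (1 + a s ^ 2 + b s ^ 2))
      ((2 * a t * deriv a t + 2 * b t * deriv b t) / (2 * Real.sqrt (1 + a t ^ 2 + b t ^ 2))) t := by
    have := (Real.hasDerivAt_sqrt hu_ne).comp t hu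
    convert! this using 1
    ring
  -- derivative of g = (√u)⁻¹
  have hg : HasDerivAt (fun s => (Real.sqrt (1 + a s ^ 2 + b s ^ 2))⁻¹)
      (-((2 * a t * deriv a t + 2 * b t * deriv b t) /
          (2 * Real.sqrt (1 + a t ^ 2 + b t ^ 2))) / Real.sqrt (1 + a t ^ 2 + b t ^ 2) ^ 2) t :=
    hsqrt.inv hs_ne
  -- derivative of v = ![-a, -b, 1]
  have hv : HasDerivAt (fun s => (![-a s, -b s, 1] : Fin 3 → ℝ))
      (![-deriv a t, -deriv b t, 0]) t := by
    rw [hasDerivAt_pi]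
    intro i
    fin_cases i
    · simpa using hat.fun_neg
    · simpa using hbt.fun_neg
    · simpa using hasDerivAt_const t (1:ℝ)
  -- derivative of r
  have hr : HasDerivAt (fun s => (![x s, y s, z s] : Fin 3 → ℝ))
      (![deriv x t, deriv y t, deriv z t]) t := by
    rw [hasDerivAt_pi]
    intro i
    fin_cases i
    · simpa using hxt
    · simpa using hyt
    · simpa using hzt
  -- derivative of n
  have hn := hg.fun_smul hv
  rw [hr.deriv, hn.deriv]
  set A := deriv a t
  set B := deriv b t
  set X := deriv x t
  set Y := deriv y t
  set S := Real.sqrt (1 + a t ^ 2 + b t ^ 2) with hS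
  have key : (![X, Y, deriv z t] : Fin 3 → ℝ) ⬝ᵥ
      (S⁻¹ • ![-A, -B, 0] +
        (-((2 * a t * A + 2 * b t * B) / (2 * S)) / S ^ 2) • ![-a t, -b t, 1])
      = -(A * X + B * Y) / S := by
    rw [hcon t ht]
    simp [dotProduct, Fin.sum_univ_three, smul_eq_mul]
    field_simp
    ring
  constructor
  · exact key
  · rw [key]
    constructor
    · intro h
      have : -(A * X + B * Y) = 0 := by
        field_simp at h
        linarith [h]
      linarith
    · intro h
      rw [h]
      simp
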